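/- arXiv:1707.08409 — 2 statements merged into one kernel-verified Lean document; each statement's English description precedes it below -/
import Mathlib

section
/- The offloading probability, viewed as a set function f(C) = Σ_k w_k Σ_f q_{f|k} (1 - Π_{(m,f) ∈ C} (1 - a_{k,m})) over sets C of (user, file) caching actions where the product only ranges over pairs with second coordinate f, is monotone nondecreasing and submodular on subsets of {1,...,K} × {1,...,F}. -/
/-- The offloading probability viewed as a set function over sets of
(user, file) caching actions is monotone nondecreasing and submodular. -/
theorem stmt_8 (K F : ℕ)
    (w : Fin K → ℝ) (q : Fin K → Fin F → ℝ) (a : Fin K → Fin K → ℝ)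
    (hw : ∀ k, 0 ≤ w k) (hq : ∀ k f, 0 ≤ q k f)
    (ha : ∀ k m, a k m ∈ Set.Icc (0 : ℝ) 1)
    (off : Finset (Fin K × Fin F) → ℝ)
    (hoff : ∀ C, off C = ∑ k, w k * ∑ f, q k f *
      (1 - ∏ m ∈ Finset.univ.filter (fun m => (m, f) ∈ C), (1 - a k m))) :
    (∀ A B : Finset (Fin K × Fin F), A ⊆ B → off A ≤ off B) ∧
    (∀ A B : Finset (Fin K × Fin F), ∀ x, A ⊆ B → x ∉ B →
      off (insert x B) - off B ≤ off (insert x A) - off A) := by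
  have hnn : ∀ (k : Fin K) (S : Finset (Fin K)), 0 ≤ ∏ m ∈ S, (1 - a k m) :=
    fun k S => Finset.prod_nonneg fun m _ => by linarith [(ha k m).2]
  have hanti : ∀ (k : Fin K) (S T : Finset (Fin K)), S ⊆ T →
      ∏ m ∈ T, (1 - a k m) ≤ ∏ m ∈ S, (1 - a k m) := by
    intro k S T hST
    rw [← Finset.prod_sdiff hST]
    have h1 : ∏ m ∈ T \ S, (1 - a k m) ≤ 1 :=
      Finset.prod_le_one (fun m _ => by linarith [(ha k m).2])
        (fun m _ => by linarith [(ha k m).1])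
    nlinarith [hnn k S, hnn k (T \ S)]
  have hfsub : ∀ (A B : Finset (Fin K × Fin F)), A ⊆ B → ∀ f : Fin F,
      Finset.univ.filter (fun m => (m, f) ∈ A) ⊆
      Finset.univ.filter (fun m => (m, f) ∈ B) := by
    intro A B hAB f m hm
    simp only [Finset.mem_filter] at *
    exact ⟨hm.1, hAB hm.2⟩
  have hmono : ∀ A B : Finset (Fin K × Fin F), A ⊆ B → off A ≤ off B := by
    intro A B hAB
    rw [hoff, hoff]
    refine Finset.sum_le_sum fun k _ => mul_le_mul_of_nonneg_left ?_ (hw k)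
    refine Finset.sum_le_sum fun f _ => mul_le_mul_of_nonneg_left ?_ (hq k f)
    linarith [hanti k _ _ (hfsub A B hAB f)]
  have hmarg : ∀ (C : Finset (Fin K × Fin F)) (x : Fin K × Fin F), x ∉ C →
      off (insert x C) - off C = ∑ k, w k * (q k x.2 * (a k x.1 *
        ∏ m ∈ Finset.univ.filter (fun m => (m, x.2) ∈ C), (1 - a k m))) := by
    intro C x hx
    rw [hoff, hoff, ← Finset.sum_sub_distrib]
    refine Finset.sum_congr rfl fun k _ => ?_
    rw [← mul_sub]
    congr 1
    rw [← Finset.sum_sub_distrib]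
    rw [Finset.sum_eq_single x.2]
    · have hfil : Finset.univ.filter (fun m => (m, x.2) ∈ insert x C)
          = insert x.1 (Finset.univ.filter (fun m => (m, x.2) ∈ C)) := by
        ext m
        simp only [Finset.mem_filter, Finset.mem_insert, Finset.mem_univ, true_and,
          Prod.ext_iff]
        constructor
        · rintro (h | h)
          · exact Or.inl h.1
          · exact Or.inr h
        · rintro (h | h)
          · exact Or.inl ⟨h, trivial⟩
          · exact Or.inr h
      have hx1 : x.1 ∉ Finset.univ.filter (fun m => (m, x.2) ∈ C) := by
        simp only [Finset.mem_filter, Finset.mem_univ, true_and]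
        intro h
        exact hx (by simpa using h)
      rw [hfil, Finset.prod_insert hx1]
      ring
    · intro f _ hf
      have hfil : Finset.univ.filter (fun m => (m, f) ∈ insert x C)
          = Finset.univ.filter (fun m => (m, f) ∈ C) := by
        ext m
        simp only [Finset.mem_filter, Finset.mem_insert, Prod.ext_iff]
        constructor
        · rintro ⟨hm, (h | h)⟩
          · exact absurd h.2 hf
          · exact ⟨hm, h⟩
        · rintro ⟨hm, h⟩
          exact ⟨hm, Or.inr h⟩
      rw [hfil]; ring
    · intro h; exact absurd (Finset.mem_univ x.2) h
  refine ⟨hmono, ?_⟩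
  intro A B x hAB hxB
  have hxA : x ∉ A := fun h => hxB (hAB h)
  rw [hmarg B x hxB, hmarg A x hxA]
  refine Finset.sum_le_sum fun k _ => mul_le_mul_of_nonneg_left ?_ (hw k)
  refine mul_le_mul_of_nonneg_left ?_ (hq k x.2)
  exact mul_le_mul_of_nonneg_left (hanti k _ _ (hfsub A B hAB x.2)) (ha k x.1).1
end

section
/- A per-block local optimum of a monotone submodular function over a partition matroid achieves at least half the optimum: let f: 2^S → R be monotone nondecreasing, submodular, with f(∅) ≥ 0, where S = S_1 ∪ ... ∪ S_K is a partition, and feasible sets are C = C_1 ∪ ... ∪ C_K with C_k ⊆ S_k, |C_k| ≤ M. If C^L is feasible and for every k, replacing C^L_k by any other feasible block does not increase f (holding the other blocks fixed), then f(C^L) ≥ (1/2) f(C*) for every feasible C*. -/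
/-- A per-block local optimum of a monotone submodular function over a partition
matroid achieves at least half the optimum. -/
theorem stmt_12 {α : Type*} [Fintype α] [DecidableEq α] (K M : ℕ)
    (blk : α → Fin K)
    (f : Finset α → ℝ)
    (hmono : ∀ A B : Finset α, A ⊆ B → f A ≤ f B)
    (hsub : ∀ A B : Finset α, ∀ x, A ⊆ B → x ∉ B →
      f (insert x B) - f B ≤ f (insert x A) - f A)
    (hempty : 0 ≤ f ∅)
    (CL : Finset α)
    (hCLfeas : ∀ k : Fin K, (CL.filter (fun x => blk x = k)).card ≤ M)
    (hlocal : ∀ k : Fin K, ∀ D : Finset α, (∀ x ∈ D, blk x = k) → D.card ≤ M →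
      f ((CL.filter (fun x => blk x ≠ k)) ∪ D) ≤ f CL)
    (Copt : Finset α)
    (hCoptfeas : ∀ k : Fin K, (Copt.filter (fun x => blk x = k)).card ≤ M) :
    f Copt ≤ 2 * f CL := by
  classical
  -- set-level submodularity
  have lemA : ∀ (X A B : Finset α), A ⊆ B → f (B ∪ X) - f B ≤ f (A ∪ X) - f A := by
    intro X
    induction X using Finset.induction_on with
    | empty => intro A B hAB; simp
    | @insert x X hxX ih =>
      intro A B hAB
      rw [Finset.union_insert, Finset.union_insert]
      by_cases hxB : x ∈ B
      · have hBX : insert x (B ∪ X) = B ∪ X := by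
          rw [Finset.insert_eq_self]; exact Finset.mem_union_left _ hxB
        rw [hBX]
        have h1 := ih A B hAB
        have h2 := hmono (A ∪ X) (insert x (A ∪ X)) (Finset.subset_insert _ _)
        linarith
      · have hxBX : x ∉ B ∪ X := by simp [hxB, hxX]
        have h3 := hsub (A ∪ X) (B ∪ X) x
          (Finset.union_subset_union hAB (subset_refl X)) hxBX
        have h4 := ih A B hAB
        linarith
  -- union bound over a family
  have lemC : ∀ (s : Finset (Fin K)) (P : Fin K → Finset α) (T : Finset α),
      f (T ∪ s.biUnion P) - f T ≤ ∑ k ∈ s, (f (T ∪ P k) - f T) := by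
    intro s P T
    induction s using Finset.induction_on with
    | empty => simp
    | @insert i s hi ih =>
      rw [Finset.biUnion_insert, Finset.sum_insert hi]
      have h1 : T ∪ (P i ∪ s.biUnion P) = (T ∪ P i) ∪ s.biUnion P := by
        rw [Finset.union_assoc]
      have h2 := lemA (s.biUnion P) T (T ∪ P i) Finset.subset_union_left
      rw [h1]; linarith
  set Bset : ℕ → Finset α := fun j => CL.filter (fun x => (blk x : ℕ) < j) with hBset
  have hB0 : Bset 0 = ∅ := by simp [hBset]
  have hBK : Bset K = CL := by
    apply Finset.filter_true_of_mem; intro x _; exact (blk x).isLt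
  have step : ∀ k : Fin K,
      f CL - f (CL.filter (fun x => blk x ≠ k)) ≤ f (Bset (k + 1)) - f (Bset k) := by
    intro k
    have hun : (CL.filter (fun x => blk x ≠ k)) ∪ (CL.filter (fun x => blk x = k)) = CL := by
      ext a; simp; tauto
    have hsubs : Bset k ⊆ CL.filter (fun x => blk x ≠ k) := by
      intro a ha
      simp only [hBset, Finset.mem_filter] at ha ⊢
      refine ⟨ha.1, fun h => ?_⟩
      rw [h] at ha; omega
    have hBk1 : Bset k ∪ (CL.filter (fun x => blk x = k)) = Bset (k + 1) := by
      ext a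
      simp only [hBset, Finset.mem_union, Finset.mem_filter, Fin.ext_iff]
      by_cases ha : a ∈ CL <;> simp [ha] <;> omega
    have h := lemA (CL.filter (fun x => blk x = k)) (Bset k)
      (CL.filter (fun x => blk x ≠ k)) hsubs
    rw [hun, hBk1] at h
    exact h
  have tel : ∑ k : Fin K, (f (Bset (k + 1)) - f (Bset k)) = f CL - f ∅ := by
    rw [Fin.sum_univ_eq_sum_range (fun j => f (Bset (j + 1)) - f (Bset j)),
      Finset.sum_range_sub (fun j => f (Bset j)), hBK, hB0]
  have hCopt : Copt = (Finset.univ : Finset (Fin K)).biUnion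
      (fun k => Copt.filter (fun x => blk x = k)) := by
    ext a; simp
  have main1 : f Copt ≤ f (CL ∪ Copt) := hmono _ _ Finset.subset_union_right
  have main2 := lemC Finset.univ (fun k => Copt.filter (fun x => blk x = k)) CL
  rw [← hCopt] at main2
  have per : ∀ k : Fin K, f (CL ∪ Copt.filter (fun x => blk x = k)) - f CL ≤
      f CL - f (CL.filter (fun x => blk x ≠ k)) := by
    intro k
    have h1 := lemA (Copt.filter (fun x => blk x = k))
      (CL.filter (fun x => blk x ≠ k)) CL (Finset.filter_subset _ _)
    have h2 := hlocal k (Copt.filter (fun x => blk x = k))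
      (fun x hx => (Finset.mem_filter.mp hx).2) (hCoptfeas k)
    linarith
  have sum1 : ∑ k : Fin K, (f (CL ∪ Copt.filter (fun x => blk x = k)) - f CL) ≤
      ∑ k : Fin K, (f CL - f (CL.filter (fun x => blk x ≠ k))) :=
    Finset.sum_le_sum (fun k _ => per k)
  have sum2 : ∑ k : Fin K, (f CL - f (CL.filter (fun x => blk x ≠ k))) ≤
      ∑ k : Fin K, (f (Bset (k + 1)) - f (Bset k)) :=
    Finset.sum_le_sum (fun k _ => step k)
  linarith
end
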